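/- If c > 0 then the function x ↦ ζ(x;c) is strictly monotonically increasing on ℝ, and if c < 0 it is strictly monotonically decreasing. -/

import Mathlib

noncomputable def zeta (x c : ℝ) : ℝ :=
  -Real.log ((Real.exp (x / 2 - c) + Real.exp (-x / 2 + c)) /
    (Real.exp (x / 2 + c) + Real.exp (-x / 2 - c)))

open Real in
lemma zeta_eq (x c : ℝ) :
    zeta x c = Real.log (Real.cosh (x / 2 + c)) - Real.log (Real.cosh (x / 2 - c)) := by
  have hA : (0 : ℝ) < Real.exp (x / 2 - c) + Real.exp (-x / 2 + c) := by positivity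
  have hB : (0 : ℝ) < Real.exp (x / 2 + c) + Real.exp (-x / 2 - c) := by positivity
  have h1 : Real.exp (x / 2 - c) + Real.exp (-x / 2 + c) = 2 * Real.cosh (x / 2 - c) := by
    rw [Real.cosh_eq]; ring_nf
  have h2 : Real.exp (x / 2 + c) + Real.exp (-x / 2 - c) = 2 * Real.cosh (x / 2 + c) := by
    rw [Real.cosh_eq]; ring_nf
  rw [zeta, Real.log_div hA.ne' hB.ne', h1, h2,
    Real.log_mul two_ne_zero (Real.cosh_pos _).ne',
    Real.log_mul two_ne_zero (Real.cosh_pos _).ne']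
  ring

open Real in
lemma zeta_hasDerivAt (x c : ℝ) :
    HasDerivAt (fun x => zeta x c)
      (Real.sinh (x / 2 + c) / Real.cosh (x / 2 + c) * (1 / 2)
        - Real.sinh (x / 2 - c) / Real.cosh (x / 2 - c) * (1 / 2)) x := by
  have key : ∀ d : ℝ, HasDerivAt (fun x => Real.log (Real.cosh (x / 2 + d)))
      (Real.sinh (x / 2 + d) / Real.cosh (x / 2 + d) * (1 / 2)) x := by
    intro d
    have h0 : HasDerivAt (fun x : ℝ => x / 2 + d) (1 / 2) x := by
      simpa using ((hasDerivAt_id x).div_const 2).add_const d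
    have h1 : HasDerivAt (fun x => Real.cosh (x / 2 + d))
        (Real.sinh (x / 2 + d) * (1 / 2)) x :=
      (Real.hasDerivAt_cosh _).comp x h0
    have h2 := (Real.hasDerivAt_log (Real.cosh_pos (x / 2 + d)).ne').comp x h1
    convert h2 using 1
    rfl
    rfl
    rfl
    ring
  have := (key c).sub (by simpa [sub_eq_add_neg] using key (-c))
  simpa [zeta_eq, sub_eq_add_neg, Pi.add_def, Pi.neg_def] using this

open Real in
lemma zeta_deriv_key (x c : ℝ) :
    Real.sinh (x / 2 + c) / Real.cosh (x / 2 + c) * (1 / 2)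
      - Real.sinh (x / 2 - c) / Real.cosh (x / 2 - c) * (1 / 2)
    = Real.sinh (2 * c) / (2 * (Real.cosh (x / 2 + c) * Real.cosh (x / 2 - c))) := by
  have h1 := (Real.cosh_pos (x / 2 + c)).ne'
  have h2 := (Real.cosh_pos (x / 2 - c)).ne'
  have key : Real.sinh (2 * c) = Real.sinh (x / 2 + c) * Real.cosh (x / 2 - c)
      - Real.cosh (x / 2 + c) * Real.sinh (x / 2 - c) := by
    rw [← Real.sinh_sub]; congr 1; ring
  rw [key]
  generalize Real.sinh (x / 2 + c) = a
  generalize Real.sinh (x / 2 - c) = b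
  generalize hp : Real.cosh (x / 2 + c) = p at h1
  generalize hq : Real.cosh (x / 2 - c) = q at h2
  field_simp

theorem zeta_strictMono_strictAnti (c : ℝ) :
    (0 < c → StrictMono fun x => zeta x c) ∧ (c < 0 → StrictAnti fun x => zeta x c) := by
  have hderiv : ∀ x, deriv (fun x => zeta x c) x
      = Real.sinh (2 * c) / (2 * (Real.cosh (x / 2 + c) * Real.cosh (x / 2 - c))) := by
    intro x
    rw [(zeta_hasDerivAt x c).deriv, zeta_deriv_key]
  constructor
  · intro hc
    apply strictMono_of_deriv_pos
    intro x
    rw [hderiv]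
    have hs : 0 < Real.sinh (2 * c) := Real.sinh_pos_iff.2 (by linarith)
    have h1 := Real.cosh_pos (x / 2 + c)
    have h2 := Real.cosh_pos (x / 2 - c)
    positivity
  · intro hc
    apply strictAnti_of_deriv_neg
    intro x
    rw [hderiv]
    have hs : Real.sinh (2 * c) < 0 := Real.sinh_neg_iff.2 (by linarith)
    have h1 := Real.cosh_pos (x / 2 + c)
    have h2 := Real.cosh_pos (x / 2 - c)
    apply div_neg_of_neg_of_pos hs (by positivity)
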